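/- arXiv:1602.08827 — 2 statements merged into one kernel-verified Lean document; each statement's English description precedes it below -/
import Mathlib

section
/- GL₂(ℚ_p) is the disjoint union of the p + 1 subsets P·(0,1; 1,0)·K₁ and P·(1,0; [λ],1)·K₁ for λ ∈ 𝔽_p: every g ∈ GL₂(ℚ_p) lies in exactly one of these double cosets. (The decomposition used in the proof of Proposition 2.2 of the paper.) -/
open Matrix

section Helpers
variable {p : ℕ} [Fact p.Prime]

lemma pinv_pos : (0:ℝ) < (p:ℝ)⁻¹ := by
  have := (Fact.out : p.Prime).pos
  positivity

lemma pinv_lt_one : (p:ℝ)⁻¹ < 1 := by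
  have h := (Fact.out : p.Prime).one_lt
  rw [inv_lt_one_iff₀]; right; exact_mod_cast h

lemma qnorm_lt_one {x : ℚ_[p]} (h : ‖x‖ < 1) : ‖x‖ ≤ (p:ℝ)⁻¹ := by
  obtain ⟨y, hy⟩ : ∃ y : ℤ_[p], (y:ℚ_[p]) = x := ⟨⟨x, h.le⟩, rfl⟩
  have hx : ‖y‖ < (p:ℝ)^((-1:ℤ)+1) := by
    rw [PadicInt.norm_def, hy]; simpa using h
  have h2 := (PadicInt.norm_le_pow_iff_norm_lt_pow_add_one y (-1)).2 hx
  rw [PadicInt.norm_def, hy] at h2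
  simpa [_root_.zpow_neg] using h2

lemma toZMod_eq_iff (x y : ℤ_[p]) :
    PadicInt.toZMod x = PadicInt.toZMod y ↔ ‖x - y‖ ≤ (p:ℝ)⁻¹ := by
  have h1 : PadicInt.toZMod x = PadicInt.toZMod y ↔ x - y ∈ RingHom.ker (PadicInt.toZMod (p := p)) := by
    rw [RingHom.mem_ker, map_sub, sub_eq_zero]
  rw [h1, PadicInt.ker_toZMod, IsLocalRing.mem_maximalIdeal, PadicInt.mem_nonunits]
  constructor
  · intro h
    have h2 := (PadicInt.norm_le_pow_iff_norm_lt_pow_add_one (x - y) (-1)).2 (by simpa using h)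
    simpa [_root_.zpow_neg] using h2
  · intro h; exact lt_of_le_of_lt h pinv_lt_one

lemma norm_add_eq_left {x y : ℚ_[p]} (h : ‖y‖ < ‖x‖) : ‖x + y‖ = ‖x‖ := by
  rcases lt_or_ge ‖x + y‖ ‖x‖ with hlt | hle
  · exfalso
    have hle2 : ‖x‖ ≤ max ‖x + y‖ ‖y‖ := by
      have := Padic.nonarchimedean (x + y) (-y)
      simpa using this
    rcases max_cases ‖x + y‖ ‖y‖ with ⟨heq, _⟩ | ⟨heq, _⟩ <;> rw [heq] at hle2 <;> linarith
  · exact le_antisymm ((Padic.nonarchimedean x y).trans (max_le le_rfl h.le)) hle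

lemma nadd_le {x y : ℚ_[p]} {r : ℝ} (hx : ‖x‖ ≤ r) (hy : ‖y‖ ≤ r) : ‖x + y‖ ≤ r :=
  (Padic.nonarchimedean x y).trans (max_le hx hy)

/-- the invariant -/
noncomputable def phi (p : ℕ) [Fact p.Prime] (c d : ℚ_[p]) : Option (ZMod p) :=
  if h : ‖c‖ ≤ ‖d‖ then
    some (PadicInt.toZMod (⟨c / d, by
      rcases eq_or_ne d 0 with rfl | hd
      · have : c = 0 := by simpa using le_antisymm (by simpa using h) (norm_nonneg c)
        simp [this]
      · rw [norm_div, div_le_one (by simpa [norm_pos_iff] using hd)]; exact h⟩ : ℤ_[p]))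
  else none

lemma phi_smul {s : ℚ_[p]} (hs : s ≠ 0) (c d : ℚ_[p]) : phi p (s*c) (s*d) = phi p c d := by
  have hnorm : (‖s*c‖ ≤ ‖s*d‖) ↔ (‖c‖ ≤ ‖d‖) := by
    rw [norm_mul, norm_mul]
    exact mul_le_mul_iff_right₀ (by simpa [norm_pos_iff] using hs)
  rcases le_or_gt ‖c‖ ‖d‖ with h | h
  · rw [phi, phi, dif_pos h, dif_pos (hnorm.2 h)]
    congr 1
    apply congrArg
    exact Subtype.ext (by simp [mul_div_mul_left _ _ hs])
  · rw [phi, phi, dif_neg (not_le.2 h), dif_neg (fun hc => (not_le.2 h) (hnorm.1 hc))]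

end Helpers


/-- membership in `K₁ = {g ∈ GL₂(ℤ_p) : g ≡ 1 (mod p)}`. -/
def InK1 (p : ℕ) [Fact p.Prime] (u : GL (Fin 2) ℚ_[p]) : Prop :=
  ∀ i j, ‖(u : Matrix (Fin 2) (Fin 2) ℚ_[p]) i j
            - (1 : Matrix (Fin 2) (Fin 2) ℚ_[p]) i j‖ ≤ (p : ℝ)⁻¹

/-- the matrix `(0, 1; 1, 0)` as an element of `GL₂(ℚ_p)`. -/
noncomputable def WMat (p : ℕ) [Fact p.Prime] : GL (Fin 2) ℚ_[p] :=
  Matrix.GeneralLinearGroup.mkOfDetNeZero !![0, 1; 1, 0]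
    (by simp [Matrix.det_fin_two_of])

/-- the matrix `(1, 0; c, 1)` as an element of `GL₂(ℚ_p)`. -/
noncomputable def NMat (p : ℕ) [Fact p.Prime] (c : ℤ_[p]) : GL (Fin 2) ℚ_[p] :=
  Matrix.GeneralLinearGroup.mkOfDetNeZero !![1, 0; (c : ℚ_[p]), 1]
    (by simp [Matrix.det_fin_two_of])


section Helpers2
variable {p : ℕ} [Fact p.Prime]

/-- lower unipotent matrix as a unit -/
noncomputable def lowGL (p : ℕ) [Fact p.Prime] (t : ℚ_[p]) : GL (Fin 2) ℚ_[p] :=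
  ⟨!![1,0;t,1], !![1,0;-t,1],
    by ext i j; fin_cases i <;> fin_cases j <;> simp [Matrix.mul_apply, Fin.sum_univ_two, Matrix.one_apply],
    by ext i j; fin_cases i <;> fin_cases j <;> simp [Matrix.mul_apply, Fin.sum_univ_two, Matrix.one_apply]⟩

/-- upper unipotent matrix as a unit -/
noncomputable def upGL (p : ℕ) [Fact p.Prime] (t : ℚ_[p]) : GL (Fin 2) ℚ_[p] :=
  ⟨!![1,t;0,1], !![1,-t;0,1],
    by ext i j; fin_cases i <;> fin_cases j <;> simp [Matrix.mul_apply, Fin.sum_univ_two, Matrix.one_apply],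
    by ext i j; fin_cases i <;> fin_cases j <;> simp [Matrix.mul_apply, Fin.sum_univ_two, Matrix.one_apply]⟩

lemma coe_lowGL (t : ℚ_[p]) : ((lowGL p t : GL (Fin 2) ℚ_[p]) : Matrix (Fin 2) (Fin 2) ℚ_[p]) = !![1,0;t,1] := rfl
lemma coe_lowGL_inv (t : ℚ_[p]) : (((lowGL p t)⁻¹ : GL (Fin 2) ℚ_[p]) : Matrix (Fin 2) (Fin 2) ℚ_[p]) = !![1,0;-t,1] := rfl
lemma coe_upGL (t : ℚ_[p]) : ((upGL p t : GL (Fin 2) ℚ_[p]) : Matrix (Fin 2) (Fin 2) ℚ_[p]) = !![1,t;0,1] := rfl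
lemma coe_upGL_inv (t : ℚ_[p]) : (((upGL p t)⁻¹ : GL (Fin 2) ℚ_[p]) : Matrix (Fin 2) (Fin 2) ℚ_[p]) = !![1,-t;0,1] := rfl

lemma coe_WMat : ((WMat p : GL (Fin 2) ℚ_[p]) : Matrix (Fin 2) (Fin 2) ℚ_[p]) = !![0,1;1,0] := rfl
lemma coe_NMat (c : ℤ_[p]) : ((NMat p c : GL (Fin 2) ℚ_[p]) : Matrix (Fin 2) (Fin 2) ℚ_[p]) = !![1,0;(c:ℚ_[p]),1] := rfl

lemma WMat_inv : (WMat p)⁻¹ = WMat p := by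
  apply inv_eq_of_mul_eq_one_right
  apply Units.ext
  show (!![0,1;1,0] : Matrix (Fin 2) (Fin 2) ℚ_[p]) * !![0,1;1,0] = 1
  ext i j; fin_cases i <;> fin_cases j <;> simp [Matrix.mul_apply, Fin.sum_univ_two, Matrix.one_apply]

lemma NMat_inv (c : ℤ_[p]) : (NMat p c)⁻¹ = NMat p (-c) := by
  apply inv_eq_of_mul_eq_one_right
  apply Units.ext
  show (!![1,0;(c:ℚ_[p]),1] : Matrix (Fin 2) (Fin 2) ℚ_[p]) * !![1,0;((-c : ℤ_[p]):ℚ_[p]),1] = 1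
  push_cast
  ext i j; fin_cases i <;> fin_cases j <;> simp [Matrix.mul_apply, Fin.sum_univ_two, Matrix.one_apply]

lemma InK1_lowGL {t : ℚ_[p]} (ht : ‖t‖ ≤ (p:ℝ)⁻¹) : InK1 p (lowGL p t) := by
  intro i j
  fin_cases i <;> fin_cases j <;>
    simp [coe_lowGL, Matrix.one_apply, ht, pinv_pos.le]

lemma InK1_upGL {t : ℚ_[p]} (ht : ‖t‖ ≤ (p:ℝ)⁻¹) : InK1 p (upGL p t) := by
  intro i j
  fin_cases i <;> fin_cases j <;>
    simp [coe_upGL, Matrix.one_apply, ht, pinv_pos.le]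

lemma norm_eq_one_of_close {x : ℚ_[p]} (h : ‖x - 1‖ ≤ (p:ℝ)⁻¹) : ‖x‖ = 1 := by
  have hx : x = 1 + (x - 1) := by ring
  rw [hx, norm_add_eq_left (by rw [norm_one]; exact lt_of_le_of_lt h pinv_lt_one), norm_one]

end Helpers2
section KeyLemma
variable {p : ℕ} [Fact p.Prime]

lemma b11_ne_zero (b : GL (Fin 2) ℚ_[p])
    (hb : (b : Matrix (Fin 2) (Fin 2) ℚ_[p]) 1 0 = 0) :
    (b : Matrix (Fin 2) (Fin 2) ℚ_[p]) 1 1 ≠ 0 := by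
  have hdet : ((b : Matrix (Fin 2) (Fin 2) ℚ_[p])).det ≠ 0 :=
    ((Matrix.isUnit_iff_isUnit_det _).1 ⟨b, rfl⟩).ne_zero
  rw [Matrix.det_fin_two, hb] at hdet
  intro h
  rw [h] at hdet
  simp at hdet

lemma phi_rep (p : ℕ) [Fact p.Prime] (T : ZMod p → ℤ_[p])
    (hT : ∀ l : ZMod p, PadicInt.toZMod (T l) = l)
    (g b u : GL (Fin 2) ℚ_[p]) (i : Option (ZMod p))
    (hb : (b : Matrix (Fin 2) (Fin 2) ℚ_[p]) 1 0 = 0) (hu : InK1 p u)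
    (hg : g = b * (Option.elim i (WMat p) (fun l => NMat p (T l))) * u) :
    phi p ((g : Matrix (Fin 2) (Fin 2) ℚ_[p]) 1 0)
      ((g : Matrix (Fin 2) (Fin 2) ℚ_[p]) 1 1) = i := by
  subst hg
  have hb11 := b11_ne_zero b hb
  set B := (b : Matrix (Fin 2) (Fin 2) ℚ_[p]) with hB
  set U := (u : Matrix (Fin 2) (Fin 2) ℚ_[p]) with hU
  have hu00 : ‖U 0 0 - 1‖ ≤ (p:ℝ)⁻¹ := by simpa [Matrix.one_apply] using hu 0 0
  have hu01 : ‖U 0 1‖ ≤ (p:ℝ)⁻¹ := by simpa [Matrix.one_apply] using hu 0 1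
  have hu10 : ‖U 1 0‖ ≤ (p:ℝ)⁻¹ := by simpa [Matrix.one_apply] using hu 1 0
  have hu11 : ‖U 1 1 - 1‖ ≤ (p:ℝ)⁻¹ := by simpa [Matrix.one_apply] using hu 1 1
  have hn00 : ‖U 0 0‖ = 1 := norm_eq_one_of_close hu00
  have hn11 : ‖U 1 1‖ = 1 := norm_eq_one_of_close hu11
  have key : ∀ (m : GL (Fin 2) ℚ_[p]) (j : Fin 2),
      ((b * m * u : GL (Fin 2) ℚ_[p]) : Matrix (Fin 2) (Fin 2) ℚ_[p]) 1 j
        = B 1 1 * ((m : Matrix (Fin 2) (Fin 2) ℚ_[p]) 1 0 * U 0 j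
            + (m : Matrix (Fin 2) (Fin 2) ℚ_[p]) 1 1 * U 1 j) := by
    intro m j
    show ((B * (m : Matrix (Fin 2) (Fin 2) ℚ_[p])) * U) 1 j = _
    simp [Matrix.mul_apply, Fin.sum_univ_two, hb]
    ring
  cases i with
  | none =>
    rw [key, key]
    simp only [Option.elim_none, coe_WMat]
    norm_num
    rw [phi_smul hb11]
    rw [phi, dif_neg]
    rw [hn00]
    exact fun hc => absurd (lt_of_le_of_lt (hc.trans hu01) pinv_lt_one) (lt_irrefl 1)
  | some l =>
    rw [key, key]
    simp only [Option.elim_some, coe_NMat]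
    norm_num
    rw [phi_smul hb11]
    set τ : ℚ_[p] := ((T l : ℤ_[p]) : ℚ_[p]) with hτ
    have hτ1 : ‖τ‖ ≤ 1 := by rw [hτ, ← PadicInt.norm_def]; exact PadicInt.norm_le_one _
    set c' : ℚ_[p] := τ * U 0 0 + U 1 0 with hc'
    set d' : ℚ_[p] := τ * U 0 1 + U 1 1 with hd'
    have hnd' : ‖d'‖ = 1 := by
      rw [hd', add_comm, norm_add_eq_left, hn11]
      rw [hn11, norm_mul]
      calc ‖τ‖ * ‖U 0 1‖ ≤ 1 * (p:ℝ)⁻¹ := by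
            apply mul_le_mul hτ1 hu01 (norm_nonneg _) zero_le_one
        _ < 1 := by rw [one_mul]; exact pinv_lt_one
    have hnc' : ‖c'‖ ≤ 1 := by
      apply nadd_le
      · rw [norm_mul]
        calc ‖τ‖ * ‖U 0 0‖ ≤ 1 * 1 := mul_le_mul hτ1 (le_of_eq hn00) (norm_nonneg _) zero_le_one
          _ = 1 := one_mul 1
      · exact hu10.trans pinv_lt_one.le
    have hd'0 : d' ≠ 0 := by intro h; rw [h, norm_zero] at hnd'; exact one_ne_zero hnd'.symm
    rw [phi, dif_pos (by rw [hnd']; exact hnc')]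
    congr 1
    rw [← hT l]
    refine (toZMod_eq_iff _ _).2 ?_
    show ‖c' / d' - τ‖ ≤ (p:ℝ)⁻¹
    have heq : c' / d' - τ = (c' - τ * d') / d' := by field_simp
    rw [heq, norm_div, hnd', div_one]
    have hsplit : c' - τ * d' = (τ * (U 0 0 - 1) + (-(τ * (U 1 1 - 1)))) + (U 1 0 + (-(τ * τ * U 0 1))) := by
      rw [hc', hd']; ring
    rw [hsplit]
    apply nadd_le
    · apply nadd_le
      · rw [norm_mul]
        calc ‖τ‖ * ‖U 0 0 - 1‖ ≤ 1 * (p:ℝ)⁻¹ := mul_le_mul hτ1 hu00 (norm_nonneg _) zero_le_one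
          _ = (p:ℝ)⁻¹ := one_mul _
      · rw [norm_neg, norm_mul]
        calc ‖τ‖ * ‖U 1 1 - 1‖ ≤ 1 * (p:ℝ)⁻¹ := mul_le_mul hτ1 hu11 (norm_nonneg _) zero_le_one
          _ = (p:ℝ)⁻¹ := one_mul _
    · apply nadd_le hu10
      rw [norm_neg, norm_mul, norm_mul]
      calc ‖τ‖ * ‖τ‖ * ‖U 0 1‖ ≤ 1 * 1 * (p:ℝ)⁻¹ := by
            apply mul_le_mul (mul_le_mul hτ1 hτ1 (norm_nonneg _) zero_le_one) hu01 (norm_nonneg _) (by norm_num)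
        _ = (p:ℝ)⁻¹ := by rw [one_mul, one_mul]
end KeyLemma
/-- the decomposition used in the proof of Proposition 2.2
of the paper.  Let `T : 𝔽_p → ℤ_p` be the Teichmüller lift (the unique root
of `X^p − X` in `ℤ_p` reducing to the given residue).  Then `GL₂(ℚ_p)` is the
disjoint union of the `p + 1` double cosets `P·(0,1;1,0)·K₁` and
`P·(1,0;[λ],1)·K₁` for `λ ∈ 𝔽_p`: every `g` lies in exactly one of them. -/
theorem statement_4 (p : ℕ) [Fact p.Prime] (T : ZMod p → ℤ_[p])
    (hT : ∀ l : ZMod p, T l ^ p = T l ∧ PadicInt.toZMod (T l) = l) :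
    ∀ g : GL (Fin 2) ℚ_[p], ∃! i : Option (ZMod p),
      ∃ b u : GL (Fin 2) ℚ_[p],
        (b : Matrix (Fin 2) (Fin 2) ℚ_[p]) 1 0 = 0 ∧ InK1 p u ∧
        g = b * (Option.elim i (WMat p) (fun l => NMat p (T l))) * u := by
  intro g
  set G := (g : Matrix (Fin 2) (Fin 2) ℚ_[p]) with hG
  set c := G 1 0 with hc
  set d := G 1 1 with hd
  refine ⟨phi p c d, ?_, ?_⟩
  · by_cases hle : ‖c‖ ≤ ‖d‖
    · have hd0 : d ≠ 0 := by
        intro h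
        have hc0 : c = 0 := by
          rw [h] at hle; simpa using le_antisymm (by simpa using hle) (norm_nonneg c)
        have hdet := ((Matrix.isUnit_iff_isUnit_det G).1 ⟨g, rfl⟩).ne_zero
        rw [Matrix.det_fin_two] at hdet
        apply hdet
        rw [← hc, ← hd, hc0, h]; ring
      have hpf : ‖c / d‖ ≤ 1 := by
        rw [norm_div, div_le_one (by simpa [norm_pos_iff] using hd0)]; exact hle
      set l : ZMod p := PadicInt.toZMod (⟨c / d, hpf⟩ : ℤ_[p]) with hl
      have hphi : phi p c d = some l := by rw [phi, dif_pos hle]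
      rw [hphi]
      set τ : ℚ_[p] := ((T l : ℤ_[p]) : ℚ_[p]) with hτ
      set t : ℚ_[p] := τ - c / d with hdeft
      have ht : ‖t‖ ≤ (p:ℝ)⁻¹ := by
        have h2 := (toZMod_eq_iff (T l) ⟨c / d, hpf⟩).1 (by rw [(hT l).2, hl])
        rw [PadicInt.norm_def] at h2
        exact h2
      refine ⟨g * (lowGL p (-t))⁻¹ * (NMat p (T l))⁻¹, lowGL p (-t), ?_,
        InK1_lowGL (by rwa [norm_neg]), ?_⟩
      · have hbmat : ((g * (lowGL p (-t))⁻¹ * (NMat p (T l))⁻¹ : GL (Fin 2) ℚ_[p])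
            : Matrix (Fin 2) (Fin 2) ℚ_[p])
            = G * !![1,0;t,1] * !![1,0;((-(T l) : ℤ_[p]) : ℚ_[p]),1] := by
          rw [NMat_inv]
          simp only [Units.val_mul, coe_lowGL_inv, coe_NMat, neg_neg, hG]
        rw [hbmat]
        push_cast
        simp only [Matrix.mul_apply, Fin.sum_univ_two]
        simp [← hc, ← hd, hdeft]
        field_simp
        rw [hτ]; ring
      · simp only [Option.elim_some]
        simp [mul_assoc]
    · have hc0 : c ≠ 0 := by
        intro h
        apply hle
        rw [h, norm_zero]
        exact norm_nonneg d
      set t : ℚ_[p] := d / c with hdeft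
      have ht : ‖t‖ ≤ (p:ℝ)⁻¹ := by
        apply qnorm_lt_one
        rw [hdeft, norm_div, div_lt_one (by simpa [norm_pos_iff] using hc0)]
        exact not_le.1 hle
      have hphi : phi p c d = none := by rw [phi, dif_neg hle]
      rw [hphi]
      refine ⟨g * (upGL p t)⁻¹ * (WMat p)⁻¹, upGL p t, ?_, InK1_upGL ht, ?_⟩
      · have hbmat : ((g * (upGL p t)⁻¹ * (WMat p)⁻¹ : GL (Fin 2) ℚ_[p])
            : Matrix (Fin 2) (Fin 2) ℚ_[p])
            = G * !![1,-t;0,1] * !![0,1;1,0] := by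
          rw [WMat_inv]
          simp only [Units.val_mul, coe_upGL_inv, coe_WMat, hG]
        rw [hbmat]
        simp only [Matrix.mul_apply, Fin.sum_univ_two]
        simp [← hc, ← hd, hdeft]
        field_simp
        ring
      · simp only [Option.elim_none]
        simp [mul_assoc]
  · intro j hj
    obtain ⟨b, u, hb, hu, hgeq⟩ := hj
    exact (phi_rep p T (fun l => (hT l).2) g b u j hb hu hgeq).symm
end

section
/- For m ≥ 1 let J_m ≤ G be the subgroup of invertible matrices (a, b; c, d) with a − 1 ∈ t𝒪, b ∈ 𝒪, c ∈ t^m𝒪, d − 1 ∈ t𝒪 and determinant in 𝒪ˣ. For any n ≥ 1, if v ∈ V is fixed by every element of J_{n+1}, then S·v is fixed by every element of J_n. In particular, if v is fixed by the pro-p Iwahori subgroup I₁ = J₁, then so is S·v. (Lemma 5.1(iv) of the paper.) -/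
open Matrix

/-- The matrix `(t, Cλ; 0, 1)` as an element of `G = GL₂(F((t)))`. -/
noncomputable def SMat {F : Type*} [Field F] (l : F) : GL (Fin 2) (LaurentSeries F) :=
  Matrix.GeneralLinearGroup.mkOfDetNeZero
    !![HahnSeries.single (1 : ℤ) (1 : F), HahnSeries.C l; 0, 1]
    (by simp [Matrix.det_fin_two_of])

/-- `x ∈ 𝒪 = F[[t]]`, i.e. no negative coefficients. -/
def InO {F : Type*} [Field F] (x : LaurentSeries F) : Prop :=
  ∀ n : ℤ, n < 0 → x.coeff n = 0

/-- `x ∈ 1 + t𝒪`. -/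
def InOneTO {F : Type*} [Field F] (x : LaurentSeries F) : Prop :=
  ∀ n : ℤ, n ≤ 0 → (x - 1).coeff n = 0

/-- `x ∈ t^m𝒪`, i.e. coefficients vanish in degrees `< m`. -/
def InTmO {F : Type*} [Field F] (m : ℕ) (x : LaurentSeries F) : Prop :=
  ∀ n : ℤ, n < (m : ℤ) → x.coeff n = 0

/-- `x ∈ 𝒪ˣ`, i.e. `x ∈ 𝒪` with nonzero constant term. -/
def InOUnits {F : Type*} [Field F] (x : LaurentSeries F) : Prop :=
  InO x ∧ x.coeff 0 ≠ 0

/-- membership in `J_m`: matrices `(a, b; c, d)` with `a − 1 ∈ t𝒪`, `b ∈ 𝒪`,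
`c ∈ t^m𝒪`, `d − 1 ∈ t𝒪` and determinant in `𝒪ˣ`. -/
def InJ {F : Type*} [Field F] (m : ℕ) (g : GL (Fin 2) (LaurentSeries F)) : Prop :=
  InOneTO ((g : Matrix (Fin 2) (Fin 2) (LaurentSeries F)) 0 0) ∧
  InO ((g : Matrix (Fin 2) (Fin 2) (LaurentSeries F)) 0 1) ∧
  InTmO m ((g : Matrix (Fin 2) (Fin 2) (LaurentSeries F)) 1 0) ∧
  InOneTO ((g : Matrix (Fin 2) (Fin 2) (LaurentSeries F)) 1 1) ∧
  InOUnits (Matrix.det (g : Matrix (Fin 2) (Fin 2) (LaurentSeries F)))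

section Key
variable {F : Type*} [Field F]

local notation "T" => HahnSeries.single (1:ℤ) (1:F)
local notation "Tinv" => HahnSeries.single (-1:ℤ) (1:F)

lemma coeff_mul_T (x : LaurentSeries F) (n : ℤ) : (x * T).coeff n = x.coeff (n-1) := by
  have := HahnSeries.coeff_mul_single_add (r := (1:F)) (x := x) (a := n-1) (b := 1)
  simpa using this

lemma coeff_Tinv_mul (x : LaurentSeries F) (n : ℤ) : (Tinv * x).coeff n = x.coeff (n+1) := by
  have := HahnSeries.coeff_single_mul_add (r := (1:F)) (x := x) (a := n+1) (b := -1)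
  simpa using this

lemma coeff_C_mul (m : F) (x : LaurentSeries F) (n : ℤ) :
    (HahnSeries.C m * x).coeff n = m * x.coeff n := by
  rw [HahnSeries.C_apply, HahnSeries.coeff_single_zero_mul]

lemma T_mul_Tinv : T * Tinv = (1 : LaurentSeries F) := by
  rw [HahnSeries.single_mul_single]; simp [HahnSeries.single_zero_one]

lemma InOneTO.coeff_neg {x : LaurentSeries F} (h : InOneTO x) {n : ℤ} (hn : n < 0) :
    x.coeff n = 0 := by
  have h1 := h n hn.le
  have : x.coeff n = (x - 1).coeff n + (1 : LaurentSeries F).coeff n := by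
    rw [HahnSeries.coeff_sub]; ring
  rw [this, h1, HahnSeries.coeff_one, if_neg hn.ne]; ring

lemma InOneTO.coeff_zero {x : LaurentSeries F} (h : InOneTO x) : x.coeff 0 = 1 := by
  have h1 := h 0 le_rfl
  have : x.coeff 0 = (x - 1).coeff 0 + (1 : LaurentSeries F).coeff 0 := by
    rw [HahnSeries.coeff_sub]; ring
  rw [this, h1, HahnSeries.coeff_one, if_pos rfl]; ring

lemma SMat_coe {K : Type*} [Field K] (l0 : K) :
    (SMat l0 : Matrix (Fin 2) (Fin 2) (LaurentSeries K)) =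
      !![HahnSeries.single (1 : ℤ) (1 : K), HahnSeries.C l0; 0, 1] := rfl

lemma key (n : ℕ) (hn : 1 ≤ n) (g : GL (Fin 2) (LaurentSeries F)) (hg : InJ n g) (l : F) :
    ∃ h : GL (Fin 2) (LaurentSeries F), InJ (n+1) h ∧
      g * SMat l = SMat (l + ((g : Matrix (Fin 2) (Fin 2) (LaurentSeries F)) 0 1).coeff 0) * h := by
  obtain ⟨ha, hb, hc, hd, hdet⟩ := hg
  set a := (g : Matrix (Fin 2) (Fin 2) (LaurentSeries F)) 0 0 with ha_def
  set b := (g : Matrix (Fin 2) (Fin 2) (LaurentSeries F)) 0 1 with hb_def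
  set c := (g : Matrix (Fin 2) (Fin 2) (LaurentSeries F)) 1 0 with hc_def
  set d := (g : Matrix (Fin 2) (Fin 2) (LaurentSeries F)) 1 1 with hd_def
  set l' : F := l + b.coeff 0 with hl'
  set Cl : LaurentSeries F := HahnSeries.C l with hCl
  set Cl' : LaurentSeries F := HahnSeries.C l' with hCl'
  have hgmat : (g : Matrix (Fin 2) (Fin 2) (LaurentSeries F)) = !![a, b; c, d] := by
    ext i j; fin_cases i <;> fin_cases j <;> rfl
  clear_value a b c d
  -- auxiliary coefficient facts
  have hn' : (1:ℤ) ≤ (n:ℤ) := by exact_mod_cast hn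
  have hcneg : ∀ m : ℤ, m ≤ 0 → c.coeff m = 0 := fun m hm => hc m (by omega)
  -- the candidate matrix
  set X : LaurentSeries F := a * Cl + b - Cl' * (c * Cl + d) with hX
  set H : Matrix (Fin 2) (Fin 2) (LaurentSeries F) :=
    !![a - Cl' * c, Tinv * X; c * T, c * Cl + d] with hH
  clear_value Cl Cl' X H
  -- coefficient facts about X
  have hXc : ∀ m : ℤ, m ≤ 0 → X.coeff m = 0 := by
    intro m hm
    have : X.coeff m = a.coeff m * l + b.coeff m - l' * (c.coeff m * l + d.coeff m) := by
      rw [hX]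
      simp only [HahnSeries.coeff_sub, HahnSeries.coeff_add, hCl, hCl',
        HahnSeries.C_apply, HahnSeries.coeff_mul_single_zero, HahnSeries.coeff_single_zero_mul,
        HahnSeries.coeff_add]
    rw [this]
    rcases eq_or_lt_of_le hm with hm0 | hm0
    · rw [hm0] at *
      rw [ha.coeff_zero, hd.coeff_zero, hcneg 0 le_rfl]
      rw [hl']
      ring
    · rw [ha.coeff_neg hm0, hd.coeff_neg hm0, hb m hm0, hcneg m hm0.le]
      ring
  -- determinant of H
  have hdetH : H.det = (g : Matrix (Fin 2) (Fin 2) (LaurentSeries F)).det := by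
    rw [hH, Matrix.det_fin_two_of, Matrix.det_fin_two (g : Matrix (Fin 2) (Fin 2) (LaurentSeries F)),
      ← ha_def, ← hb_def, ← hc_def, ← hd_def]
    have hTT : T * Tinv = (1 : LaurentSeries F) := T_mul_Tinv
    linear_combination (-(c * X)) * hTT - c * hX
  have hdetHne : H.det ≠ 0 := by
    rw [hdetH]
    exact fun h0 => hdet.2 (by rw [h0]; simp)
  refine ⟨Matrix.GeneralLinearGroup.mkOfDetNeZero H hdetHne, ?_, ?_⟩
  · -- membership in J (n+1)
    have hco : (Matrix.GeneralLinearGroup.mkOfDetNeZero H hdetHne :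
        Matrix (Fin 2) (Fin 2) (LaurentSeries F)) = H := rfl
    refine ⟨?_, ?_, ?_, ?_, ?_⟩
    · intro m hm
      rw [hco]
      have : (H 0 0 - 1).coeff m = (a - 1).coeff m - l' * c.coeff m := by
        simp [hH, hCl', HahnSeries.coeff_sub, HahnSeries.coeff_single_zero_mul]
        ring
      rw [this, ha m hm, hcneg m hm]; ring
    · intro m hm
      rw [hco]
      have : H 0 1 = Tinv * X := by simp [hH]
      rw [this, coeff_Tinv_mul]
      exact hXc (m+1) (by omega)
    · intro m hm
      rw [hco]
      have : H 1 0 = c * T := by simp [hH]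
      rw [this, coeff_mul_T]
      exact hc (m-1) (by push_cast at hm ⊢; omega)
    · intro m hm
      rw [hco]
      have : (H 1 1 - 1).coeff m = c.coeff m * l + (d - 1).coeff m := by
        simp [hH, hCl, HahnSeries.coeff_sub, HahnSeries.coeff_mul_single_zero]
        ring
      rw [this, hd m hm, hcneg m hm]; ring
    · rw [hco, hdetH]; exact hdet
  · -- the group identity
    apply Units.ext
    rw [Units.val_mul, Units.val_mul]
    have hTT : T * Tinv = (1 : LaurentSeries F) := T_mul_Tinv
    have hco : ((Matrix.GeneralLinearGroup.mkOfDetNeZero H hdetHne :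
        GL (Fin 2) (LaurentSeries F)) : Matrix (Fin 2) (Fin 2) (LaurentSeries F)) = H := rfl
    rw [SMat_coe, SMat_coe, hco, hgmat, hH, ← hCl, ← hCl']
    refine Matrix.ext fun i j => ?_
    fin_cases i <;> fin_cases j <;>
      simp only [Matrix.mul_apply, Fin.sum_univ_two, Fin.zero_eta, Fin.mk_one,
        Matrix.cons_val', Matrix.cons_val_zero, Matrix.cons_val_one, Matrix.head_cons,
        Matrix.head_fin_const, Matrix.empty_val', Matrix.cons_val_fin_one, Matrix.of_apply]
    · ring
    · linear_combination (-X) * hTT - hX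
    · ring
    · ring

end Key

lemma InJ_anti {F : Type*} [Field F] {m m' : ℕ} (hmm : m ≤ m')
    {g : GL (Fin 2) (LaurentSeries F)} (h : InJ m' g) : InJ m g :=
  ⟨h.1, h.2.1, fun j hj => h.2.2.1 j (lt_of_lt_of_le hj (by exact_mod_cast hmm)),
    h.2.2.2.1, h.2.2.2.2⟩

/-- Lemma 5.1(iv) of the paper.  With
`S·v = Σ_{λ∈F} (t, Cλ; 0, 1)·v`: for any `n ≥ 1`, if `v` is fixed by every
element of `J_{n+1}`, then `S·v` is fixed by every element of `J_n`.  In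
particular, if `v` is fixed by the pro-p Iwahori subgroup `I₁ = J₁`, then so
is `S·v`. -/
theorem statement_8 (p r : ℕ) (hp : p.Prime) (hr : 1 ≤ r)
    (F : Type*) [Field F] [Fintype F] (hF : Fintype.card F = p ^ r)
    (k : Type*) [Field k] (V : Type*) [AddCommGroup V] [Module k V]
    (ρ : Representation k (GL (Fin 2) (LaurentSeries F)) V) (v : V) :
    (∀ n : ℕ, 1 ≤ n → (∀ g, InJ (n + 1) g → ρ g v = v) →
      ∀ g, InJ n g → ρ g (∑ l : F, ρ (SMat l) v) = ∑ l : F, ρ (SMat l) v) ∧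
    ((∀ g, InJ 1 g → ρ g v = v) →
      ∀ g, InJ 1 g → ρ g (∑ l : F, ρ (SMat l) v) = ∑ l : F, ρ (SMat l) v) := by
  have main : ∀ n : ℕ, 1 ≤ n → (∀ g, InJ (n + 1) g → ρ g v = v) →
      ∀ g, InJ n g → ρ g (∑ l : F, ρ (SMat l) v) = ∑ l : F, ρ (SMat l) v := by
    intro n hn hfix g hg
    set b0 : F := ((g : Matrix (Fin 2) (Fin 2) (LaurentSeries F)) 0 1).coeff 0 with hb0
    have step : ∀ l : F, ρ g (ρ (SMat l) v) = ρ (SMat (l + b0)) v := by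
      intro l
      obtain ⟨h, hmem, heq⟩ := key n hn g hg l
      have h1 : ρ g (ρ (SMat l) v) = ρ (g * SMat l) v := by
        rw [_root_.map_mul]; rfl
      rw [h1, heq, _root_.map_mul, Module.End.mul_apply, hfix h hmem]
    rw [map_sum]
    calc ∑ l : F, ρ g (ρ (SMat l) v) = ∑ l : F, ρ (SMat (l + b0)) v :=
          Finset.sum_congr rfl (fun l _ => step l)
      _ = ∑ l : F, ρ (SMat l) v :=
          Fintype.sum_equiv (Equiv.addRight b0) _ _ (fun l => rfl)
  exact ⟨main, fun hfix => main 1 le_rfl (fun g hg => hfix g (InJ_anti one_le_two hg))⟩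
end
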